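/- Let N ≥ 1 and let ρ : ℝ → ℝ be measurable such that for every x ∈ ℝ, ∫ (1+|λ|)^{2N−2} |ρ(λ)| e^{λx} dλ < ∞. Then the function h(x) := ∫ ρ(λ) e^{λx} dλ is (2N−2)-times differentiable with h^{(j)}(x) = ∫ λ^j ρ(λ) e^{λx} dλ, and for every x ∈ ℝ: (1/N!) ∫_{ℝ^N} Δ(λ_1,…,λ_N)^2 ∏_{k=1}^N ρ(λ_k) e^{λ_k x} dλ = det( h^{(i+j−2)}(x) )_{i,j=1,…,N}. (This identifies the one-matrix model partition function with the Wronskian tau-function W_N[h, h′, …, h^{(N−1)}] of the generalized Burgers–Hopf hierarchy.) -/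

import Mathlib

open MeasureTheory

section Aux

variable {K : ℕ} {ρ : ℝ → ℝ} (hρ : Measurable ρ)
  (hint : ∀ x : ℝ, Integrable (fun l : ℝ => (1 + |l|) ^ K * |ρ l| * Real.exp (l * x)))

lemma exp_bound' {l x y : ℝ} (hy : y ∈ Metric.ball x 1) :
    Real.exp (l * y) ≤ Real.exp (l * (x-1)) + Real.exp (l * (x+1)) := by
  rw [Metric.mem_ball, Real.dist_eq, abs_lt] at hy
  rcases le_or_gt 0 l with hl | hl
  · calc Real.exp (l * y) ≤ Real.exp (l * (x+1)) := by
          apply Real.exp_le_exp.2; nlinarith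
      _ ≤ _ := le_add_of_nonneg_left (Real.exp_pos _).le
  · calc Real.exp (l * y) ≤ Real.exp (l * (x-1)) := by
          apply Real.exp_le_exp.2; nlinarith
      _ ≤ _ := le_add_of_nonneg_right (Real.exp_pos _).le

lemma norm_term_le' (K m : ℕ) (hm : m ≤ K) (ρ : ℝ → ℝ) (l y : ℝ) :
    ‖l ^ m * ρ l * Real.exp (l * y)‖ ≤ (1+|l|)^K * |ρ l| * Real.exp (l * y) := by
  rw [Real.norm_eq_abs, abs_mul, abs_mul, abs_pow, Real.abs_exp]
  gcongr
  calc |l| ^ m ≤ (1 + |l|) ^ m := by gcongr; linarith [abs_nonneg l]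
    _ ≤ (1 + |l|) ^ K := by apply pow_le_pow_right₀ (by linarith [abs_nonneg l]) hm

lemma meas_g' (ρ : ℝ → ℝ) (hρ : Measurable ρ) (m : ℕ) (y : ℝ) :
    Measurable (fun l => l ^ m * ρ l * Real.exp (l * y)) :=
  ((measurable_id.pow_const m).mul hρ).mul ((measurable_id.mul_const y).exp)

include hρ hint in
lemma int_g' {m : ℕ} (hm : m ≤ K) (y : ℝ) :
    Integrable (fun l => l ^ m * ρ l * Real.exp (l * y)) := by
  apply (hint y).mono ((meas_g' ρ hρ m y).aestronglyMeasurable)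
  filter_upwards with l
  rw [Real.norm_eq_abs (((1:ℝ)+|l|)^K * _ * _), abs_of_nonneg (by positivity)]
  exact norm_term_le' K m hm ρ l y

include hint in
omit hρ in
lemma int_bd (x : ℝ) : Integrable (fun l : ℝ =>
    (1+|l|)^K * |ρ l| * Real.exp (l * (x-1)) + (1+|l|)^K * |ρ l| * Real.exp (l * (x+1))) :=
  (hint (x-1)).add (hint (x+1))

omit hρ hint in
lemma norm_bd {m : ℕ} (hm : m ≤ K) (x : ℝ) {y : ℝ} (hy : y ∈ Metric.ball x 1) (l : ℝ) :
    ‖l ^ m * ρ l * Real.exp (l * y)‖ ≤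
      (1+|l|)^K * |ρ l| * Real.exp (l * (x-1)) + (1+|l|)^K * |ρ l| * Real.exp (l * (x+1)) := by
  calc ‖l ^ m * ρ l * Real.exp (l * y)‖ ≤ (1+|l|)^K * |ρ l| * Real.exp (l * y) :=
        norm_term_le' K m hm ρ l y
    _ ≤ _ := by
        rw [← mul_add]
        exact mul_le_mul_of_nonneg_left (exp_bound' hy) (by positivity)

include hρ hint in
lemma hasDeriv_g {j : ℕ} (hj : j + 1 ≤ K) (x : ℝ) :
    HasDerivAt (fun y => ∫ l : ℝ, l ^ j * ρ l * Real.exp (l * y))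
      (∫ l : ℝ, l ^ (j+1) * ρ l * Real.exp (l * x)) x := by
  have := hasDerivAt_integral_of_dominated_loc_of_deriv_le (μ := volume)
    (F := fun y l => l ^ j * ρ l * Real.exp (l * y))
    (F' := fun y l => l ^ (j+1) * ρ l * Real.exp (l * y))
    (x₀ := x) (Metric.ball_mem_nhds x one_pos)
    (Filter.Eventually.of_forall fun y => (meas_g' ρ hρ j y).aestronglyMeasurable)
    (int_g' hρ hint (le_trans (Nat.le_succ j) hj) x)
    ((meas_g' ρ hρ (j+1) x).aestronglyMeasurable)
    (Filter.Eventually.of_forall fun l y hy => norm_bd hj x hy l)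
    (int_bd hint x)
    (Filter.Eventually.of_forall fun l y _ => ?_)
  · exact this.2
  · have h1 : HasDerivAt (fun y : ℝ => Real.exp (l * y)) (l * Real.exp (l * y)) y := by
      simpa [mul_comm, Function.comp_def] using (Real.hasDerivAt_exp (l * y)).comp y
        ((hasDerivAt_id y).const_mul l)
    have := h1.const_mul (l ^ j * ρ l)
    convert this using 1
    · rfl
    ring

include hρ hint in
lemma cont_g {j : ℕ} (hj : j ≤ K) :
    Continuous (fun y => ∫ l : ℝ, l ^ j * ρ l * Real.exp (l * y)) := by
  rw [continuous_iff_continuousAt]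
  intro x
  apply continuousAt_of_dominated
    (Filter.Eventually.of_forall fun y => (meas_g' ρ hρ j y).aestronglyMeasurable)
    _ (int_bd hint x)
    (Filter.Eventually.of_forall fun l => by fun_prop)
  filter_upwards [Metric.ball_mem_nhds x one_pos] with y hy
  exact Filter.Eventually.of_forall fun l => norm_bd hj x hy l

end Aux

/-- The Vandermonde product `Δ(l₁,…,l_N) = ∏_{j<i} (l_i − l_j)`. -/
noncomputable def vdm {N : ℕ} (l : Fin N → ℝ) : ℝ :=
  ∏ i : Fin N, ∏ j ∈ Finset.Ioi i, (l j - l i)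

lemma step_a {N : ℕ} (ρ : ℝ → ℝ) (x : ℝ) (lam : Fin N → ℝ) :
    (vdm lam) ^ 2 * ∏ k : Fin N, (ρ (lam k) * Real.exp (lam k * x)) =
    ∑ σ : Equiv.Perm (Fin N), ∑ τ : Equiv.Perm (Fin N),
      ((Equiv.Perm.sign σ : ℤ) * (Equiv.Perm.sign τ : ℤ) : ℝ) *
        ∏ k : Fin N, ((lam k) ^ (((σ⁻¹ k : Fin N) : ℕ) + ((τ⁻¹ k : Fin N) : ℕ)) *
          ρ (lam k) * Real.exp (lam k * x)) := by
  have hv : vdm lam = (Matrix.vandermonde lam).det := (Matrix.det_vandermonde lam).symm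
  rw [hv, sq, Matrix.det_apply', Finset.sum_mul_sum, Finset.sum_mul]
  refine Finset.sum_congr rfl fun σ _ => ?_
  rw [Finset.sum_mul]
  refine Finset.sum_congr rfl fun τ _ => ?_
  have hσ : ∏ i : Fin N, Matrix.vandermonde lam (σ i) i
      = ∏ k : Fin N, (lam k) ^ ((σ⁻¹ k : Fin N) : ℕ) := by
    rw [← Equiv.prod_comp σ (fun k => (lam k) ^ ((σ⁻¹ k : Fin N) : ℕ))]
    simp [Matrix.vandermonde]
  have hτ : ∏ i : Fin N, Matrix.vandermonde lam (τ i) i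
      = ∏ k : Fin N, (lam k) ^ ((τ⁻¹ k : Fin N) : ℕ) := by
    rw [← Equiv.prod_comp τ (fun k => (lam k) ^ ((τ⁻¹ k : Fin N) : ℕ))]
    simp [Matrix.vandermonde]
  rw [hσ, hτ]
  have key : ∏ k : Fin N, ((lam k) ^ (((σ⁻¹ k : Fin N) : ℕ) + ((τ⁻¹ k : Fin N) : ℕ)) *
        ρ (lam k) * Real.exp (lam k * x))
      = (∏ k : Fin N, (lam k) ^ ((σ⁻¹ k : Fin N) : ℕ)) *
        ((∏ k : Fin N, (lam k) ^ ((τ⁻¹ k : Fin N) : ℕ)) *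
          ∏ k : Fin N, (ρ (lam k) * Real.exp (lam k * x))) := by
    rw [← Finset.prod_mul_distrib, ← Finset.prod_mul_distrib]
    refine Finset.prod_congr rfl fun k _ => ?_
    rw [pow_add]; ring
  rw [key]
  ring

lemma step_d {N : ℕ} (c : Fin N → Fin N → ℝ) :
    ∑ σ : Equiv.Perm (Fin N), ∑ τ : Equiv.Perm (Fin N),
      ((Equiv.Perm.sign σ : ℤ) * (Equiv.Perm.sign τ : ℤ) : ℝ) *
        ∏ k : Fin N, c (σ⁻¹ k) (τ⁻¹ k)
    = (N.factorial : ℝ) * (Matrix.of c).det := by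
  have hterm : ∀ σ τ : Equiv.Perm (Fin N),
      ((Equiv.Perm.sign σ : ℤ) * (Equiv.Perm.sign τ : ℤ) : ℝ) *
        ∏ k : Fin N, c (σ⁻¹ k) (τ⁻¹ k)
      = ((Equiv.Perm.sign (σ⁻¹ * τ) : ℤ) : ℝ) * ∏ i : Fin N, c ((σ⁻¹ * τ) i) i := by
    intro σ τ
    have hsign : (Equiv.Perm.sign (σ⁻¹ * τ) : ℤ) =
        (Equiv.Perm.sign σ : ℤ) * (Equiv.Perm.sign τ : ℤ) := by
      rw [Equiv.Perm.sign_mul, Equiv.Perm.sign_inv]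
      push_cast
      ring
    rw [hsign]
    congr 1
    · push_cast; ring
    · rw [← Equiv.prod_comp τ (fun k => c (σ⁻¹ k) (τ⁻¹ k))]
      simp [Equiv.Perm.mul_apply]
  have hinner : ∀ σ : Equiv.Perm (Fin N),
      (∑ τ : Equiv.Perm (Fin N),
        ((Equiv.Perm.sign (σ⁻¹ * τ) : ℤ) : ℝ) * ∏ i : Fin N, c ((σ⁻¹ * τ) i) i)
      = (Matrix.of c).det := by
    intro σ
    rw [Matrix.det_apply']
    exact Fintype.sum_equiv (Equiv.mulLeft σ⁻¹) _ _ (fun τ => rfl)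
  calc ∑ σ : Equiv.Perm (Fin N), ∑ τ : Equiv.Perm (Fin N),
        ((Equiv.Perm.sign σ : ℤ) * (Equiv.Perm.sign τ : ℤ) : ℝ) *
          ∏ k : Fin N, c (σ⁻¹ k) (τ⁻¹ k)
      = ∑ σ : Equiv.Perm (Fin N), (Matrix.of c).det := by
        refine Finset.sum_congr rfl fun σ _ => ?_
        rw [← hinner σ]
        exact Finset.sum_congr rfl fun τ _ => hterm σ τ
    _ = (N.factorial : ℝ) * (Matrix.of c).det := by
        rw [Finset.sum_const, Finset.card_univ, Fintype.card_perm, Fintype.card_fin,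
          nsmul_eq_mul]

lemma andreief (N : ℕ) (ρ : ℝ → ℝ) (hρ : Measurable ρ)
    (hint : ∀ x : ℝ, Integrable (fun l : ℝ =>
      (1 + |l|) ^ (2 * N - 2) * |ρ l| * Real.exp (l * x))) (x : ℝ) :
    ∫ lam : Fin N → ℝ,
        (vdm lam) ^ 2 * ∏ k : Fin N, (ρ (lam k) * Real.exp (lam k * x))
      = (N.factorial : ℝ) * (Matrix.of fun i j : Fin N =>
          ∫ l : ℝ, l ^ ((i : ℕ) + (j : ℕ)) * ρ l * Real.exp (l * x)).det := by
  have hexp : ∀ a b : Fin N, (a : ℕ) + (b : ℕ) ≤ 2 * N - 2 := by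
    intro a b
    have ha := a.is_lt; have hb := b.is_lt
    omega
  have hintg : ∀ m : ℕ, m ≤ 2 * N - 2 →
      Integrable (fun l : ℝ => l ^ m * ρ l * Real.exp (l * x)) :=
    fun m hm => int_g' hρ hint hm x
  have hterm : ∀ σ τ : Equiv.Perm (Fin N),
      Integrable (fun lam : Fin N → ℝ =>
        ((Equiv.Perm.sign σ : ℤ) * (Equiv.Perm.sign τ : ℤ) : ℝ) *
          ∏ k : Fin N, ((lam k) ^ (((σ⁻¹ k : Fin N) : ℕ) + ((τ⁻¹ k : Fin N) : ℕ)) *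
            ρ (lam k) * Real.exp (lam k * x))) := by
    intro σ τ
    exact (Integrable.fintype_prod
      (f := fun k l => l ^ (((σ⁻¹ k : Fin N) : ℕ) + ((τ⁻¹ k : Fin N) : ℕ)) *
        ρ l * Real.exp (l * x))
      (fun k => hintg _ (hexp _ _))).const_mul _
  calc ∫ lam : Fin N → ℝ,
        (vdm lam) ^ 2 * ∏ k : Fin N, (ρ (lam k) * Real.exp (lam k * x))
      = ∫ lam : Fin N → ℝ, ∑ σ : Equiv.Perm (Fin N), ∑ τ : Equiv.Perm (Fin N),
          ((Equiv.Perm.sign σ : ℤ) * (Equiv.Perm.sign τ : ℤ) : ℝ) *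
            ∏ k : Fin N, ((lam k) ^ (((σ⁻¹ k : Fin N) : ℕ) + ((τ⁻¹ k : Fin N) : ℕ)) *
              ρ (lam k) * Real.exp (lam k * x)) := by
        exact integral_congr_ae (Filter.Eventually.of_forall fun lam => step_a ρ x lam)
    _ = ∑ σ : Equiv.Perm (Fin N), ∑ τ : Equiv.Perm (Fin N),
          ((Equiv.Perm.sign σ : ℤ) * (Equiv.Perm.sign τ : ℤ) : ℝ) *
            ∫ lam : Fin N → ℝ,
              ∏ k : Fin N, ((lam k) ^ (((σ⁻¹ k : Fin N) : ℕ) + ((τ⁻¹ k : Fin N) : ℕ)) *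
                ρ (lam k) * Real.exp (lam k * x)) := by
        rw [integral_finset_sum _
          (fun σ _ => integrable_finset_sum _ (fun τ _ => hterm σ τ))]
        refine Finset.sum_congr rfl fun σ _ => ?_
        rw [integral_finset_sum _ (fun τ _ => hterm σ τ)]
        exact Finset.sum_congr rfl fun τ _ => integral_const_mul _ _
    _ = ∑ σ : Equiv.Perm (Fin N), ∑ τ : Equiv.Perm (Fin N),
          ((Equiv.Perm.sign σ : ℤ) * (Equiv.Perm.sign τ : ℤ) : ℝ) *
            ∏ k : Fin N, ∫ l : ℝ,
              l ^ (((σ⁻¹ k : Fin N) : ℕ) + ((τ⁻¹ k : Fin N) : ℕ)) *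
                ρ l * Real.exp (l * x) := by
        refine Finset.sum_congr rfl fun σ _ => Finset.sum_congr rfl fun τ _ => ?_
        congr 1
        exact integral_fintype_prod_eq_prod
          (fun k l => l ^ (((σ⁻¹ k : Fin N) : ℕ) + ((τ⁻¹ k : Fin N) : ℕ)) *
            ρ l * Real.exp (l * x))
    _ = (N.factorial : ℝ) * (Matrix.of fun i j : Fin N =>
          ∫ l : ℝ, l ^ ((i : ℕ) + (j : ℕ)) * ρ l * Real.exp (l * x)).det :=
        step_d (fun i j => ∫ l : ℝ, l ^ ((i : ℕ) + (j : ℕ)) * ρ l * Real.exp (l * x))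

theorem stmt5 (N : ℕ) (hN : 1 ≤ N) (ρ : ℝ → ℝ) (hρ : Measurable ρ)
    (hint : ∀ x : ℝ, Integrable (fun l : ℝ =>
      (1 + |l|) ^ (2 * N - 2) * |ρ l| * Real.exp (l * x)))
    (h : ℝ → ℝ) (hdef : ∀ x, h x = ∫ l : ℝ, ρ l * Real.exp (l * x)) :
    ContDiff ℝ ((2 * N - 2 : ℕ) : ℕ∞) h ∧
    (∀ j : ℕ, j ≤ 2 * N - 2 → ∀ x : ℝ,
      iteratedDeriv j h x = ∫ l : ℝ, l ^ j * ρ l * Real.exp (l * x)) ∧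
    (∀ x : ℝ,
      (1 / (N.factorial : ℝ)) *
          ∫ lam : Fin N → ℝ,
            (vdm lam) ^ 2 * ∏ k : Fin N, (ρ (lam k) * Real.exp (lam k * x)) =
        Matrix.det (Matrix.of fun i j : Fin N =>
          iteratedDeriv ((i : ℕ) + (j : ℕ)) h x)) := by
  have hh0 : h = fun y => ∫ l : ℝ, l ^ 0 * ρ l * Real.exp (l * y) := by
    funext y; rw [hdef y]; simp
  have iter : ∀ j : ℕ, j ≤ 2 * N - 2 →
      iteratedDeriv j h = fun y => ∫ l : ℝ, l ^ j * ρ l * Real.exp (l * y) := by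
    intro j
    induction j with
    | zero => intro _; rw [iteratedDeriv_zero]; exact hh0
    | succ n ih =>
      intro hn
      rw [iteratedDeriv_succ, ih (by omega)]
      funext y
      exact (hasDeriv_g hρ hint hn y).deriv
  have CD : ∀ m j : ℕ, j + m ≤ 2 * N - 2 →
      ContDiff ℝ (m : ℕ∞) (fun y => ∫ l : ℝ, l ^ j * ρ l * Real.exp (l * y)) := by
    intro m
    induction m with
    | zero =>
      intro j hj
      exact contDiff_zero.2 (cont_g hρ hint (by omega))
    | succ n ih =>
      intro j hj
      have hder : deriv (fun y => ∫ l : ℝ, l ^ j * ρ l * Real.exp (l * y))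
            = fun y => ∫ l : ℝ, l ^ (j+1) * ρ l * Real.exp (l * y) :=
          funext fun y => (hasDeriv_g hρ hint (by omega) y).deriv
      have key : ContDiff ℝ (((n : ℕ) : WithTop ℕ∞) + 1)
          (fun y => ∫ l : ℝ, l ^ j * ρ l * Real.exp (l * y)) := by
        rw [contDiff_succ_iff_deriv]
        refine ⟨fun y => (hasDeriv_g hρ hint (by omega) y).differentiableAt,
          fun hc => by simp at hc, ?_⟩
        rw [hder]
        exact ih (j+1) (by omega)
      exact_mod_cast key
  have hexp : ∀ a b : Fin N, (a : ℕ) + (b : ℕ) ≤ 2 * N - 2 := by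
    intro a b
    have ha := a.is_lt; have hb := b.is_lt
    omega
  refine ⟨?_, fun j hj x => by rw [iter j hj], ?_⟩
  · rw [hh0]
    exact CD (2*N-2) 0 (by omega)
  · intro x
    rw [andreief N ρ hρ hint x]
    have hdet : (Matrix.of fun i j : Fin N =>
          iteratedDeriv ((i : ℕ) + (j : ℕ)) h x)
        = Matrix.of fun i j : Fin N =>
          ∫ l : ℝ, l ^ ((i : ℕ) + (j : ℕ)) * ρ l * Real.exp (l * x) := by
      ext i j
      simp only [Matrix.of_apply]
      rw [iter _ (hexp i j)]
    rw [hdet, ← mul_assoc, one_div, inv_mul_cancel₀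
      (Nat.cast_ne_zero.2 N.factorial_ne_zero), one_mul]
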